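/- Fix ε > 0 and let μ̄ = ρ̄ω be a Gibbs critical point of E_{ε,A}, i.e., ρ̄(x) = exp(W_{μ̄}(x)/ε) / ∫_S exp(W_{μ̄}(z)/ε) dω(z) for all x ∈ S. Let h : S → ℝ be a bounded measurable function with ∫_S h dμ̄ = 0 and sup_{x∈S} |h(x)| ≤ 1/2, and let μ := (1+h)μ̄ (a probability measure). Then E_{ε,A}(μ) − E_{ε,A}(μ̄) = ε·∫_S [(1+h)·log(1+h) − h] dμ̄ − (1/2)·∬_{S×S} K_A(x,y) h(x) h(y) dμ̄(x) dμ̄(y). -/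

import Mathlib

open MeasureTheory Real Filter Topology

noncomputable section

/-- The unit sphere `S = 𝕊^{d-1}` in `ℝ^d`. -/
abbrev Sph (d : ℕ) : Type := Metric.sphere (0 : EuclideanSpace ℝ (Fin d)) 1

variable {d : ℕ}

/-- The bilinear form `⟨x, A y⟩` for the diagonal matrix `A = diag lam`. -/
def qA (lam : Fin d → ℝ) (x y : EuclideanSpace ℝ (Fin d)) : ℝ :=
  ∑ i, lam i * x i * y i

/-- The interaction kernel `K_A(x,y) = exp ⟨x, A y⟩`. -/
def Kker (lam : Fin d → ℝ) (x y : Sph d) : ℝ :=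
  Real.exp (qA lam (x : EuclideanSpace ℝ (Fin d)) (y : EuclideanSpace ℝ (Fin d)))

/-- The interaction energy `I_A(μ)`. -/
def IA (lam : Fin d → ℝ) (μ : Measure (Sph d)) : ℝ :=
  ∫ x, ∫ y, Kker lam x y ∂μ ∂μ

/-- The potential `W_μ(x) = ∫ K_A(x,y) dμ(y)`. -/
def WA (lam : Fin d → ℝ) (μ : Measure (Sph d)) (x : Sph d) : ℝ :=
  ∫ y, Kker lam x y ∂μ

open scoped Classical in
/-- Relative entropy of `μ` with respect to `ω`, with value `+∞` when `μ` is not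
absolutely continuous w.r.t. `ω` or the entropy integral diverges. -/
def Ent (ω μ : Measure (Sph d)) : EReal :=
  if μ ≪ ω ∧ Integrable (fun x => Real.log (μ.rnDeriv ω x).toReal) μ
  then ((∫ x, Real.log (μ.rnDeriv ω x).toReal ∂μ : ℝ) : EReal)
  else ⊤

/-- The free energy `E_{ε,A}(μ) = ε·Ent(μ) − (1/2)·I_A(μ)`. -/
def EA (lam : Fin d → ℝ) (ω : Measure (Sph d)) (ε : ℝ) (μ : Measure (Sph d)) : EReal :=
  (ε : EReal) * Ent ω μ - ((IA lam μ / 2 : ℝ) : EReal)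

/-- The antipodal map on the sphere. -/
def antip (x : Sph d) : Sph d :=
  ⟨-(x : EuclideanSpace ℝ (Fin d)), by
    have hx := x.2
    rw [mem_sphere_zero_iff_norm] at hx ⊢
    rwa [norm_neg]⟩

/-- The sphere self-map induced by a linear isometry equivalence of `ℝ^d`. -/
def sphMap (g : EuclideanSpace ℝ (Fin d) ≃ₗᵢ[ℝ] EuclideanSpace ℝ (Fin d)) (x : Sph d) : Sph d :=
  ⟨g (x : EuclideanSpace ℝ (Fin d)), by
    have hx := x.2
    rw [mem_sphere_zero_iff_norm] at hx ⊢
    rwa [g.norm_map]⟩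

/-- `ω` is the uniform probability measure on the sphere, characterised as a
rotation-invariant Borel probability measure. -/
def IsUniform (ω : Measure (Sph d)) : Prop :=
  IsProbabilityMeasure ω ∧
  ∀ g : EuclideanSpace ℝ (Fin d) ≃ₗᵢ[ℝ] EuclideanSpace ℝ (Fin d),
    Measure.map (sphMap g) ω = ω

/-- The (topological) support of a measure. -/
def msupport (μ : Measure (Sph d)) : Set (Sph d) :=
  {x | ∀ U : Set (Sph d), IsOpen U → x ∈ U → 0 < μ U}

/-- The set of global maximizers of the potential `W_ν`. -/
def argmaxW (lam : Fin d → ℝ) (ν : Measure (Sph d)) : Set (Sph d) :=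
  {x | ∀ y, WA lam ν y ≤ WA lam ν x}

/-- `μ` is a Gibbs critical point of `E_{ε,A}`. -/
def IsGibbs (lam : Fin d → ℝ) (ω : Measure (Sph d)) (ε : ℝ) (μ : Measure (Sph d)) : Prop :=
  IsProbabilityMeasure μ ∧
  μ = ω.withDensity (fun x => ENNReal.ofReal
    (Real.exp (WA lam μ x / ε) / ∫ z, Real.exp (WA lam μ z / ε) ∂ω))

/-- `μ` is a global minimizer of `E_{ε,A}` over Borel probability measures. -/
def IsMinimizer (lam : Fin d → ℝ) (ω : Measure (Sph d)) (ε : ℝ) (μ : Measure (Sph d)) : Prop :=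
  IsProbabilityMeasure μ ∧
  ∀ ν : Measure (Sph d), IsProbabilityMeasure ν → EA lam ω ε μ ≤ EA lam ω ε ν

/-- `m_ε`, the infimum of the free energy over probability measures. -/
def mEps (lam : Fin d → ℝ) (ω : Measure (Sph d)) (ε : ℝ) : EReal :=
  sInf {r : EReal | ∃ μ : Measure (Sph d), IsProbabilityMeasure μ ∧ EA lam ω ε μ = r}

section Stmt17Helpers

variable {d : ℕ}

lemma coord_abs_le_one' (x : Sph d) (i : Fin d) : |(x : EuclideanSpace ℝ (Fin d)) i| ≤ 1 := by
  have hx : ‖(x : EuclideanSpace ℝ (Fin d))‖ = 1 := by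
    have := x.2; rwa [mem_sphere_zero_iff_norm] at this
  calc |(x : EuclideanSpace ℝ (Fin d)) i| ≤ ‖(x : EuclideanSpace ℝ (Fin d))‖ := by
        rw [EuclideanSpace.norm_eq]
        rw [show |(x : EuclideanSpace ℝ (Fin d)) i| = Real.sqrt (‖(x : EuclideanSpace ℝ (Fin d)) i‖^2) by
          rw [Real.sqrt_sq_eq_abs, Real.norm_eq_abs, abs_abs]]
        exact Real.sqrt_le_sqrt (Finset.single_le_sum (f := fun j => ‖(x : EuclideanSpace ℝ (Fin d)) j‖^2) (fun j _ => sq_nonneg _) (Finset.mem_univ i))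
    _ = 1 := hx

lemma Kker_symm (lam : Fin d → ℝ) (x y : Sph d) : Kker lam x y = Kker lam y x := by
  unfold Kker qA; congr 1; exact Finset.sum_congr rfl (fun i _ => by ring)

lemma qA_abs_le (lam : Fin d → ℝ) (x y : Sph d) :
    |qA lam (x : EuclideanSpace ℝ (Fin d)) (y : EuclideanSpace ℝ (Fin d))| ≤ ∑ i, |lam i| := by
  unfold qA
  refine (Finset.abs_sum_le_sum_abs _ _).trans (Finset.sum_le_sum fun i _ => ?_)
  rw [abs_mul, abs_mul]
  calc |lam i| * |(x : EuclideanSpace ℝ (Fin d)) i| * |(y : EuclideanSpace ℝ (Fin d)) i|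
      ≤ |lam i| * 1 * 1 := by
        apply mul_le_mul (mul_le_mul le_rfl (coord_abs_le_one' x i) (abs_nonneg _) (abs_nonneg _)) (coord_abs_le_one' y i) (abs_nonneg _) (by positivity)
    _ = |lam i| := by ring

lemma Kker_pos (lam : Fin d → ℝ) (x y : Sph d) : 0 < Kker lam x y := Real.exp_pos _

lemma Kker_abs_le (lam : Fin d → ℝ) (x y : Sph d) : |Kker lam x y| ≤ Real.exp (∑ i, |lam i|) := by
  rw [abs_of_pos (Kker_pos lam x y)]
  exact Real.exp_le_exp.2 ((le_abs_self _).trans (qA_abs_le lam x y))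

lemma Kker_cont (lam : Fin d → ℝ) : Continuous (fun p : Sph d × Sph d => Kker lam p.1 p.2) := by
  unfold Kker qA
  apply Real.continuous_exp.comp
  apply continuous_finset_sum
  intro i _
  exact ((continuous_const.mul ((continuous_apply i).comp ((PiLp.continuous_ofLp (p := 2) (β := fun _ : Fin d => ℝ)).comp (continuous_subtype_val.comp continuous_fst)))).mul ((continuous_apply i).comp ((PiLp.continuous_ofLp (p := 2) (β := fun _ : Fin d => ℝ)).comp (continuous_subtype_val.comp continuous_snd))))

lemma Kker_cont_right (lam : Fin d → ℝ) (x : Sph d) :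
    Continuous fun y : Sph d => Kker lam x y := by
  unfold Kker qA
  apply Real.continuous_exp.comp
  apply continuous_finset_sum
  intro i _
  exact continuous_const.mul ((continuous_apply i).comp ((PiLp.continuous_ofLp (p := 2) (β := fun _ : Fin d => ℝ)).comp continuous_subtype_val))

lemma integrable_bdd {μ : Measure (Sph d)} [IsFiniteMeasure μ] {f : Sph d → ℝ}
    (hf : AEStronglyMeasurable f μ) {C : ℝ} (hC : ∀ x, |f x| ≤ C) : Integrable f μ :=
  Integrable.mono' (integrable_const C) hf (ae_of_all _ fun x => by simpa [Real.norm_eq_abs] using hC x)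

lemma integral_withDensity_ofReal {ν : Measure (Sph d)} {ρ : Sph d → ℝ} (hρ : Measurable ρ)
    (hρ0 : ∀ x, 0 ≤ ρ x) (g : Sph d → ℝ) :
    ∫ x, g x ∂(ν.withDensity fun x => ENNReal.ofReal (ρ x)) = ∫ x, ρ x * g x ∂ν := by
  rw [show (fun x => ENNReal.ofReal (ρ x)) = fun x => ((Real.toNNReal (ρ x) : NNReal) : ENNReal) from rfl,
    integral_withDensity_eq_integral_smul (f := fun x => Real.toNNReal (ρ x)) hρ.real_toNNReal g]
  refine integral_congr_ae (ae_of_all _ fun x => ?_)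
  simp [NNReal.smul_def, Real.coe_toNNReal _ (hρ0 x)]

lemma smeas_intK {lam : Fin d → ℝ} (ν : Measure (Sph d)) [SFinite ν] {g : Sph d → ℝ}
    (hg : Measurable g) : StronglyMeasurable (fun x : Sph d => ∫ y, Kker lam x y * g y ∂ν) := by
  apply StronglyMeasurable.integral_prod_right (f := fun x y => Kker lam x y * g y)
  exact (((Kker_cont lam).measurable).mul (hg.comp measurable_snd)).stronglyMeasurable

lemma smeas_W {lam : Fin d → ℝ} (ν : Measure (Sph d)) [SFinite ν] :
    StronglyMeasurable (WA lam ν) := by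
  unfold WA
  apply StronglyMeasurable.integral_prod_right (f := fun x y => Kker lam x y)
  exact ((Kker_cont lam).measurable).stronglyMeasurable

end Stmt17Helpers

set_option maxHeartbeats 1000000 in
/-- exact free-energy Taylor expansion in the density chart at a
Gibbs critical point. -/
theorem stmt17 (d : ℕ) (hd : 2 ≤ d) (lam : Fin d → ℝ)
    (hanti : Antitone lam)
    (hgap : lam ⟨1, by omega⟩ < lam ⟨0, by omega⟩)
    (hpos : ∀ i, 0 < lam i)
    (ω : Measure (Sph d)) (hω : IsUniform ω)
    (ε : ℝ) (hε : 0 < ε)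
    (μbar : Measure (Sph d)) (ρbar : Sph d → ℝ)
    (hμbarp : IsProbabilityMeasure μbar)
    (hμbar : μbar = ω.withDensity (fun x => ENNReal.ofReal (ρbar x)))
    (hρbar : ∀ x, ρbar x = Real.exp (WA lam μbar x / ε) / ∫ z, Real.exp (WA lam μbar z / ε) ∂ω)
    (h : Sph d → ℝ) (hmeas : Measurable h)
    (hmean : (∫ x, h x ∂μbar) = 0)
    (hbd : ∀ x, |h x| ≤ 1 / 2)
    (hprob : IsProbabilityMeasure (μbar.withDensity (fun x => ENNReal.ofReal (1 + h x)))) :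
    EA lam ω ε (μbar.withDensity (fun x => ENNReal.ofReal (1 + h x))) - EA lam ω ε μbar =
      ((ε * ∫ x, ((1 + h x) * Real.log (1 + h x) - h x) ∂μbar -
          (1 / 2) * ∫ x, ∫ y, Kker lam x y * h x * h y ∂μbar ∂μbar : ℝ) : EReal) := by
  haveI := hμbarp
  haveI := hω.1
  haveI := hprob
  set C : ℝ := Real.exp (∑ i, |lam i|) with hCdef
  set W : Sph d → ℝ := WA lam μbar with hWdef
  have hWsm : StronglyMeasurable W := smeas_W μbar
  have hWbd : ∀ x, |W x| ≤ C := by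
    intro x
    rw [hWdef, ← Real.norm_eq_abs]
    have := norm_integral_le_of_norm_le_const (μ := μbar)
      (f := fun y => Kker lam x y) (C := C)
      (ae_of_all _ fun y => by simpa [Real.norm_eq_abs] using Kker_abs_le lam x y)
    simpa [WA, measure_univ] using this
  set Z : ℝ := ∫ z, Real.exp (W z / ε) ∂ω with hZdef
  have hexp_meas : Measurable fun z => Real.exp (W z / ε) :=
    Real.measurable_exp.comp (hWsm.measurable.div_const ε)
  have hexp_bd : ∀ z, |Real.exp (W z / ε)| ≤ Real.exp (C / ε) := by
    intro z
    rw [abs_of_pos (Real.exp_pos _)]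
    apply Real.exp_le_exp.2
    have h1 : W z ≤ C := (abs_le.1 (hWbd z)).2
    exact (div_le_div_iff_of_pos_right hε).2 h1
  have hint_exp : Integrable (fun z => Real.exp (W z / ε)) ω :=
    integrable_bdd hexp_meas.aestronglyMeasurable hexp_bd
  have hZpos : 0 < Z := by
    have hlb : ∀ z, Real.exp (-(C / ε)) ≤ Real.exp (W z / ε) := by
      intro z
      apply Real.exp_le_exp.2
      have h1 : -C ≤ W z := (abs_le.1 (hWbd z)).1
      rw [← neg_div]
      exact (div_le_div_iff_of_pos_right hε).2 h1
    calc (0:ℝ) < Real.exp (-(C / ε)) := Real.exp_pos _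
      _ = ∫ _z, Real.exp (-(C / ε)) ∂ω := by simp [measure_univ]
      _ ≤ Z := integral_mono (integrable_const _) hint_exp hlb
  have hρ_pos : ∀ x, 0 < ρbar x := fun x => by
    rw [hρbar x]; exact div_pos (Real.exp_pos _) hZpos
  have hρ_meas : Measurable ρbar := by
    rw [show ρbar = fun x => Real.exp (W x / ε) / Z from funext hρbar]
    exact hexp_meas.div_const Z
  have hlogρ : ∀ x, Real.log (ρbar x) = W x / ε - Real.log Z := fun x => by
    rw [hρbar x, Real.log_div (Real.exp_ne_zero _) hZpos.ne', Real.log_exp]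
  have h1h_lb : ∀ x, (1:ℝ)/2 ≤ 1 + h x := fun x => by
    have := (abs_le.1 (hbd x)).1; linarith
  have h1h_ub : ∀ x, 1 + h x ≤ (2:ℝ) := fun x => by
    have := (abs_le.1 (hbd x)).2; linarith
  have h1h_pos : ∀ x, (0:ℝ) < 1 + h x := fun x => lt_of_lt_of_le (by norm_num) (h1h_lb x)
  set L : Sph d → ℝ := fun x => Real.log (1 + h x) with hLdef
  have hLmeas : Measurable L := Real.measurable_log.comp (measurable_const.add hmeas)
  have hLbd : ∀ x, |L x| ≤ Real.log 2 := by
    intro x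
    rw [abs_le]
    constructor
    · rw [← Real.log_inv]
      exact Real.log_le_log (by norm_num) (by linarith [h1h_lb x])
    · exact Real.log_le_log (h1h_pos x) (h1h_ub x)
  -- densities
  set f : Sph d → ENNReal := fun x => ENNReal.ofReal (ρbar x) with hfdef
  set g : Sph d → ENNReal := fun x => ENNReal.ofReal (1 + h x) with hgdef
  have hf : Measurable f := hρ_meas.ennreal_ofReal
  have hg : Measurable g := (measurable_const.add hmeas).ennreal_ofReal
  set μ : Measure (Sph d) := μbar.withDensity g with hμdef
  have hμω : μ = ω.withDensity (f * g) := by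
    rw [hμdef, hμbar, ← withDensity_mul ω hf hg]
  have hacμbar : μbar ≪ ω := by
    rw [hμbar]; exact withDensity_absolutelyContinuous ω f
  have hacμ : μ ≪ ω := by
    rw [hμω]; exact withDensity_absolutelyContinuous ω (f * g)
  -- entropy of μbar
  have hrn1 : (fun x => Real.log (μbar.rnDeriv ω x).toReal) =ᵐ[μbar] fun x => Real.log (ρbar x) := by
    have h1 : μbar.rnDeriv ω =ᵐ[ω] f := by
      conv_lhs => rw [hμbar]
      exact Measure.rnDeriv_withDensity ω hf
    filter_upwards [h1.filter_mono hacμbar.ae_le] with x hx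
    rw [hx, hfdef]
    simp [ENNReal.toReal_ofReal (hρ_pos x).le]
  set φ : Sph d → ℝ := fun x => W x / ε - Real.log Z with hφdef
  have hWint : Integrable W μbar := integrable_bdd hWsm.aestronglyMeasurable hWbd
  have hφint : Integrable φ μbar := (hWint.div_const ε).sub (integrable_const _)
  have hlogρ_eq : (fun x => Real.log (ρbar x)) = φ := funext fun x => hlogρ x
  have hint1 : Integrable (fun x => Real.log (μbar.rnDeriv ω x).toReal) μbar :=
    (hlogρ_eq ▸ hφint).congr hrn1.symm
  have hEnt1 : Ent ω μbar = ((∫ x, φ x ∂μbar : ℝ) : EReal) := by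
    rw [Ent, if_pos ⟨hacμbar, hint1⟩]
    exact congrArg _ ((integral_congr_ae hrn1).trans (by rw [hlogρ_eq]))
  -- entropy of μ
  set ψ : Sph d → ℝ := fun x => φ x + L x with hψdef
  have hrn2 : (fun x => Real.log (μ.rnDeriv ω x).toReal) =ᵐ[μ] ψ := by
    have h1 : μ.rnDeriv ω =ᵐ[ω] f * g := by
      conv_lhs => rw [hμω]
      exact Measure.rnDeriv_withDensity ω (hf.mul hg)
    filter_upwards [h1.filter_mono hacμ.ae_le] with x hx
    rw [hx]
    simp only [Pi.mul_apply, hfdef, hgdef, ENNReal.toReal_mul,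
      ENNReal.toReal_ofReal (hρ_pos x).le, ENNReal.toReal_ofReal (h1h_pos x).le]
    rw [Real.log_mul (hρ_pos x).ne' (h1h_pos x).ne', hlogρ x]
  have hψmeas : Measurable ψ := ((hWsm.measurable.div_const ε).sub measurable_const).add hLmeas
  have hψbd : ∀ x, |ψ x| ≤ (C / ε + |Real.log Z|) + Real.log 2 := by
    intro x
    refine (abs_add_le _ _).trans (add_le_add ?_ (hLbd x))
    refine (abs_sub _ _).trans (add_le_add ?_ le_rfl)
    rw [abs_div, abs_of_pos hε]
    exact (div_le_div_iff_of_pos_right hε).2 (hWbd x)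
  have hψint : Integrable ψ μ := integrable_bdd hψmeas.aestronglyMeasurable hψbd
  have hint2 : Integrable (fun x => Real.log (μ.rnDeriv ω x).toReal) μ := hψint.congr hrn2.symm
  have hEnt2 : Ent ω μ = ((∫ x, ψ x ∂μ : ℝ) : EReal) := by
    rw [Ent, if_pos ⟨hacμ, hint2⟩]
    exact congrArg _ (integral_congr_ae hrn2)
  -- convert ∫ ψ dμ to μbar
  have hψμ : ∫ x, ψ x ∂μ = ∫ x, (1 + h x) * ψ x ∂μbar := by
    rw [hμdef, hgdef]
    exact integral_withDensity_ofReal (measurable_const.add hmeas) (fun x => (h1h_pos x).le) ψ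
  set T1 : ℝ := ∫ x, (1 + h x) * L x ∂μbar with hT1def
  set T2 : ℝ := ∫ x, h x * W x ∂μbar with hT2def
  have hhint : Integrable h μbar := integrable_bdd hmeas.aestronglyMeasurable hbd
  have hhWint : Integrable (fun x => h x * W x) μbar :=
    integrable_bdd (hmeas.mul hWsm.measurable).aestronglyMeasurable
      (C := (1/2) * C) fun x => by
        rw [abs_mul]
        exact mul_le_mul (hbd x) (hWbd x) (abs_nonneg _) (by norm_num)
  have hT1int : Integrable (fun x => (1 + h x) * L x) μbar :=
    integrable_bdd ((measurable_const.add hmeas).mul hLmeas).aestronglyMeasurable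
      (C := 2 * Real.log 2) fun x => by
        rw [abs_mul]
        refine mul_le_mul ?_ (hLbd x) (abs_nonneg _) (by norm_num)
        rw [abs_of_pos (h1h_pos x)]; exact h1h_ub x
  have hSμ : ∫ x, ψ x ∂μ = (∫ x, φ x ∂μbar) + T2 / ε + T1 := by
    rw [hψμ]
    have hexpand : (fun x => (1 + h x) * ψ x) =
        fun x => (φ x + ((h x * W x) / ε - Real.log Z * h x)) + (1 + h x) * L x := by
      funext x
      simp only [hψdef, hφdef]
      ring
    rw [hexpand]
    have hint2' : Integrable (fun x => (h x * W x) / ε - Real.log Z * h x) μbar :=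
      (hhWint.div_const ε).sub (hhint.const_mul _)
    have hint12 : Integrable (fun x => φ x + ((h x * W x) / ε - Real.log Z * h x)) μbar :=
      hφint.add hint2'
    rw [integral_add hint12 hT1int, integral_add hφint hint2',
      integral_sub (hhWint.div_const ε) (hhint.const_mul _), integral_div,
      integral_const_mul, hmean]
    simp [hT2def, hT1def]
  -- interaction energies
  have hIA1 : IA lam μbar = ∫ x, W x ∂μbar := rfl
  set V : Sph d → ℝ := fun x => ∫ y, Kker lam x y * h y ∂μbar with hVdef
  have hVsm : StronglyMeasurable V := smeas_intK μbar hmeas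
  have hVbd : ∀ x, |V x| ≤ C * (1/2) := by
    intro x
    rw [hVdef, ← Real.norm_eq_abs]
    have := norm_integral_le_of_norm_le_const (μ := μbar)
      (f := fun y => Kker lam x y * h y) (C := C * (1/2))
      (ae_of_all _ fun y => by
        rw [Real.norm_eq_abs, abs_mul]
        exact mul_le_mul (Kker_abs_le lam x y) (hbd y) (abs_nonneg _)
          (le_trans (abs_nonneg _) (Kker_abs_le lam x y)))
    simpa [measure_univ] using this
  have hKxcont : ∀ x : Sph d, Continuous fun y : Sph d => Kker lam x y := fun x =>
    Kker_cont_right lam x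
  have hKxint : ∀ x : Sph d, Integrable (fun y => Kker lam x y) μbar := fun x =>
    integrable_bdd (hKxcont x).measurable.aestronglyMeasurable (fun y => Kker_abs_le lam x y)
  have hKxhint : ∀ x : Sph d, Integrable (fun y => Kker lam x y * h y) μbar := fun x =>
    integrable_bdd ((hKxcont x).measurable.mul hmeas).aestronglyMeasurable
      (C := C * (1/2)) fun y => by
        rw [abs_mul]
        exact mul_le_mul (Kker_abs_le lam x y) (hbd y) (abs_nonneg _)
          (le_trans (abs_nonneg _) (Kker_abs_le lam x y))
  have hinner : ∀ x : Sph d, ∫ y, Kker lam x y ∂μ = W x + V x := by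
    intro x
    rw [hμdef, hgdef,
      integral_withDensity_ofReal (ρ := fun x => 1 + h x) (measurable_const.add hmeas) (fun y => (h1h_pos y).le)
        (fun y => Kker lam x y)]
    rw [show (fun y => (1 + h y) * Kker lam x y) =
        fun y => Kker lam x y + Kker lam x y * h y from funext fun y => by ring]
    rw [integral_add (hKxint x) (hKxhint x)]
    rfl
  have hIA2 : IA lam μ = ∫ x, (1 + h x) * (W x + V x) ∂μbar := by
    have e1 : IA lam μ = ∫ x, (W x + V x) ∂μ :=
      integral_congr_ae (ae_of_all _ fun x => hinner x)
    rw [e1, hμdef, hgdef,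
      integral_withDensity_ofReal (ρ := fun x => 1 + h x) (measurable_const.add hmeas) (fun y => (h1h_pos y).le)
        (fun x => W x + V x)]
  have hVint : Integrable V μbar := integrable_bdd hVsm.aestronglyMeasurable hVbd
  have hhVint : Integrable (fun x => h x * V x) μbar :=
    integrable_bdd (hmeas.mul hVsm.measurable).aestronglyMeasurable
      (C := (1/2) * (C * (1/2))) fun x => by
        rw [abs_mul]
        exact mul_le_mul (hbd x) (hVbd x) (abs_nonneg _) (by norm_num)
  have hFub : ∫ x, V x ∂μbar = T2 := by
    have hprodint : Integrable (Function.uncurry fun x y => Kker lam x y * h y)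
        (μbar.prod μbar) := by
      refine Integrable.mono' (integrable_const (C * (1/2)))
        (((Kker_cont lam).measurable.mul (hmeas.comp measurable_snd)).aestronglyMeasurable) ?_
      refine ae_of_all _ fun p => ?_
      rw [Real.norm_eq_abs, Function.uncurry]
      rw [abs_mul]
      exact mul_le_mul (Kker_abs_le lam p.1 p.2) (hbd p.2) (abs_nonneg _)
        (le_trans (abs_nonneg _) (Kker_abs_le lam p.1 p.2))
    have hswap := integral_integral_swap hprodint
    rw [hVdef]
    simp only []
    rw [hswap, hT2def]
    refine integral_congr_ae (ae_of_all _ fun y => ?_)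
    show ∫ x, Kker lam x y * h y ∂μbar = h y * W y
    rw [integral_mul_const]
    have : ∫ x, Kker lam x y ∂μbar = W y := by
      rw [hWdef]
      exact integral_congr_ae (ae_of_all _ fun x => Kker_symm lam x y)
    rw [this]; ring
  have hQ : (∫ x, ∫ y, Kker lam x y * h x * h y ∂μbar ∂μbar) = ∫ x, h x * V x ∂μbar := by
    refine integral_congr_ae (ae_of_all _ fun x => ?_)
    rw [hVdef]
    simp only []
    rw [← integral_const_mul]
    exact integral_congr_ae (ae_of_all _ fun y => by ring)
  have hIA2' : IA lam μ = IA lam μbar + T2 + T2 + ∫ x, h x * V x ∂μbar := by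
    rw [hIA2, hIA1]
    have hexpand : (fun x => (1 + h x) * (W x + V x)) =
        fun x => (W x + h x * W x) + (V x + h x * V x) := funext fun x => by ring
    have i1 : Integrable (fun x => W x + h x * W x) μbar := hWint.add hhWint
    have i2 : Integrable (fun x => V x + h x * V x) μbar := hVint.add hhVint
    rw [hexpand, integral_add i1 i2, integral_add hWint hhWint, integral_add hVint hhVint, hFub]
    rw [hT2def]
    ring
  -- final assembly
  have hT1' : ∫ x, ((1 + h x) * Real.log (1 + h x) - h x) ∂μbar = T1 := by
    rw [integral_sub hT1int hhint, hmean, sub_zero]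
  rw [EA, EA, hEnt1, hEnt2, ← EReal.coe_mul, ← EReal.coe_mul, ← EReal.coe_sub, ← EReal.coe_sub,
    ← EReal.coe_sub]
  rw [EReal.coe_eq_coe_iff]
  rw [hSμ, hIA2', hT1', hQ]
  field_simp
  ring

end
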